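/- Let λ, μ > 0 with λ < μ and set u₁ = 1/√((1+λ²)(1+μ²)). If χ = μu₁ and ψ = −λu₁ satisfy the two equations λ(1−μ²)/((1+λ²)(1+μ²)) − (2/μ)χψ + (1/λ)ψ² − λ(1+μ²)/(μ²−λ²)·τ² = 0 and μ(1−λ²)/((1+λ²)(1+μ²)) − (2/λ)χψ + (1/μ)χ² + μ(1+λ²)/(μ²−λ²)·z² = 0 with τ = z = 0, then λ² = μ² = 4, contradicting λ < μ. Hence this choice of (χ, ψ) is impossible when λ ≠ μ. -/

import Mathlib

/-- With 0 < λ < μ, u₁ = 1/√((1+λ²)(1+μ²)), the choice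
χ = μu₁, ψ = −λu₁, τ = z = 0 cannot satisfy the two Codazzi equations: they
would force λ² = μ² = 4, contradicting λ < μ. -/
theorem stmt_8 (lam mu u₁ chi psi tau z : ℝ) (hlam : 0 < lam) (hlm : lam < mu)
    (hu₁ : u₁ = 1 / Real.sqrt ((1 + lam ^ 2) * (1 + mu ^ 2)))
    (hchi : chi = mu * u₁) (hpsi : psi = -(lam * u₁)) (htau : tau = 0) (hz : z = 0)
    (h1 : lam * (1 - mu ^ 2) / ((1 + lam ^ 2) * (1 + mu ^ 2)) - (2 / mu) * (chi * psi) +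
        (1 / lam) * psi ^ 2 - lam * (1 + mu ^ 2) / (mu ^ 2 - lam ^ 2) * tau ^ 2 = 0)
    (h2 : mu * (1 - lam ^ 2) / ((1 + lam ^ 2) * (1 + mu ^ 2)) - (2 / lam) * (chi * psi) +
        (1 / mu) * chi ^ 2 + mu * (1 + lam ^ 2) / (mu ^ 2 - lam ^ 2) * z ^ 2 = 0) :
    False := by
  have hmu : 0 < mu := hlam.trans hlm
  have hD : 0 < (1 + lam ^ 2) * (1 + mu ^ 2) := by positivity
  have hu : ((1 + lam ^ 2) * (1 + mu ^ 2)) * u₁ ^ 2 = 1 := by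
    rw [hu₁, div_pow, one_pow, Real.sq_sqrt hD.le]
    field_simp
  subst hchi hpsi htau hz
  have hml : mu ^ 2 - lam ^ 2 ≠ 0 := by nlinarith
  field_simp at h1 h2
  -- h1 gives mu^2 = 4, h2 gives lam^2 = 4
  have k1 : lam ^ 2 * mu * (4 - mu ^ 2) = 0 := by
    have h1' : (mu ^ 2 - lam ^ 2) * (lam * (4 - mu ^ 2)) = 0 := by
      linear_combination h1 - 3 * lam * (mu ^ 2 - lam ^ 2) * hu
    have h1'' := (mul_eq_zero.1 h1').resolve_left hml
    linear_combination lam * mu * h1''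
  have k2 : mu ^ 2 * lam * (4 - lam ^ 2) = 0 := by
    have h2' : (mu ^ 2 - lam ^ 2) * (mu * (4 - lam ^ 2)) = 0 := by
      linear_combination h2 - 3 * mu * (mu ^ 2 - lam ^ 2) * hu
    have h2'' := (mul_eq_zero.1 h2').resolve_left hml
    linear_combination mu * lam * h2''
  have e1 : mu ^ 2 = 4 := by
    rcases mul_eq_zero.1 k1 with h | h
    · nlinarith [mul_pos (pow_pos hlam 2) hmu, mul_pos (pow_pos hmu 2) hlam]
    · linarith
  have e2 : lam ^ 2 = 4 := by
    rcases mul_eq_zero.1 k2 with h | h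
    · nlinarith [mul_pos (pow_pos hlam 2) hmu, mul_pos (pow_pos hmu 2) hlam]
    · linarith
  nlinarith
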